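/- Let A(h) be the n×n tridiagonal antisymmetric matrix with nonzero superdiagonal entries h = (h_1, ..., h_{n-1}) and A(h') the analogous matrix with entries h' = (h'_1, ..., h'_{n-1}), also all nonzero. Suppose S is an invertible n×n real matrix with S e_1 = e_1, e_2^T S = e_2^T, and S A(h) = A(h') S. Then S is diagonal with diagonal entries (1, ±1, ..., ±1), and |h_i| = |h'_i| for all i = 1, ..., n-1. -/

import Mathlib

open Matrix

/-- The n×n tridiagonal antisymmetric matrix with superdiagonal entries
`h 0, h 1, ..., h (n-2)`. -/
def triA (n : ℕ) (h : ℕ → ℝ) : Matrix (Fin n) (Fin n) ℝ :=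
  Matrix.of fun i j =>
    if (i : ℕ) + 1 = (j : ℕ) then h i
    else if (j : ℕ) + 1 = (i : ℕ) then -(h j) else 0

lemma sum_spike {n : ℕ} (f : Fin n → ℝ) (k : ℕ) (hk : k < n) :
    ∑ x : Fin n, (if (x : ℕ) = k then f x else 0) = f ⟨k, hk⟩ := by
  rw [Finset.sum_eq_single ⟨k, hk⟩]
  · simp
  · intro b _ hb
    rw [if_neg]
    simpa [Fin.ext_iff] using hb
  · simp

lemma mul_triA_apply (n : ℕ) (h : ℕ → ℝ) (S : Matrix (Fin n) (Fin n) ℝ) (i j : Fin n) :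
    (S * triA n h) i j =
      (if hj : 0 < (j : ℕ) then S i ⟨(j : ℕ) - 1, by omega⟩ * h ((j : ℕ) - 1) else 0)
      - (if hj : (j : ℕ) + 1 < n then S i ⟨(j : ℕ) + 1, hj⟩ * h ((j : ℕ)) else 0) := by
  rw [Matrix.mul_apply]
  have step : ∀ k : Fin n, S i k * triA n h k j =
      (if ((k : ℕ) = (j : ℕ) - 1 ∧ 0 < (j : ℕ)) then S i k * h k else 0)
      + (if (k : ℕ) = (j : ℕ) + 1 then -(S i k * h j) else 0) := by
    intro k
    simp only [triA, of_apply]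
    by_cases h1 : (k : ℕ) + 1 = (j : ℕ)
    · rw [if_pos h1, if_pos ⟨by omega, by omega⟩, if_neg (by omega)]; ring
    · rw [if_neg h1]
      by_cases h2 : (j : ℕ) + 1 = (k : ℕ)
      · rw [if_pos h2, if_neg (by omega), if_pos (by omega)]; ring
      · rw [if_neg h2, if_neg (by omega), if_neg (by omega)]; ring
  rw [Finset.sum_congr rfl fun k _ => step k, Finset.sum_add_distrib]
  have e1 : (∑ x : Fin n, if ((x : ℕ) = (j : ℕ) - 1 ∧ 0 < (j : ℕ)) then S i x * h x else 0)
      = (if hj : 0 < (j : ℕ) then S i ⟨(j : ℕ) - 1, by omega⟩ * h ((j : ℕ) - 1) else 0) := by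
    by_cases hj0 : 0 < (j : ℕ)
    · rw [dif_pos hj0, ← sum_spike (fun x : Fin n => S i x * h x) ((j : ℕ) - 1) (by omega)]
      exact Finset.sum_congr rfl fun x _ => by simp [hj0]
    · rw [dif_neg hj0]
      exact Finset.sum_eq_zero fun x _ => by simp [hj0]
  have e2 : (∑ x : Fin n, if (x : ℕ) = (j : ℕ) + 1 then -(S i x * h j) else 0)
      = -(if hj : (j : ℕ) + 1 < n then S i ⟨(j : ℕ) + 1, hj⟩ * h ((j : ℕ)) else 0) := by
    by_cases hjn : (j : ℕ) + 1 < n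
    · rw [dif_pos hjn, ← sum_spike (fun x : Fin n => -(S i x * h j)) ((j : ℕ) + 1) hjn]
    · rw [dif_neg hjn, neg_zero]
      exact Finset.sum_eq_zero fun x _ => by rw [if_neg (by omega)]
  rw [e1, e2]
  ring

lemma triA_mul_apply (n : ℕ) (h' : ℕ → ℝ) (S : Matrix (Fin n) (Fin n) ℝ) (i j : Fin n) :
    (triA n h' * S) i j =
      (if hi : (i : ℕ) + 1 < n then h' i * S ⟨(i : ℕ) + 1, hi⟩ j else 0)
      - (if hi : 0 < (i : ℕ) then h' ((i : ℕ) - 1) * S ⟨(i : ℕ) - 1, by omega⟩ j else 0) := by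
  rw [Matrix.mul_apply]
  have step : ∀ k : Fin n, triA n h' i k * S k j =
      (if (k : ℕ) = (i : ℕ) + 1 then h' i * S k j else 0)
      + (if ((k : ℕ) = (i : ℕ) - 1 ∧ 0 < (i : ℕ)) then -(h' k * S k j) else 0) := by
    intro k
    simp only [triA, of_apply]
    by_cases h1 : (i : ℕ) + 1 = (k : ℕ)
    · rw [if_pos h1, if_pos (by omega), if_neg (by omega)]; ring
    · rw [if_neg h1]
      by_cases h2 : (k : ℕ) + 1 = (i : ℕ)
      · rw [if_pos h2, if_neg (by omega), if_pos ⟨by omega, by omega⟩]; ring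
      · rw [if_neg h2, if_neg (by omega), if_neg (by omega)]; ring
  rw [Finset.sum_congr rfl fun k _ => step k, Finset.sum_add_distrib]
  have e1 : (∑ x : Fin n, if (x : ℕ) = (i : ℕ) + 1 then h' i * S x j else 0)
      = (if hi : (i : ℕ) + 1 < n then h' i * S ⟨(i : ℕ) + 1, hi⟩ j else 0) := by
    by_cases hin : (i : ℕ) + 1 < n
    · rw [dif_pos hin, ← sum_spike (fun x : Fin n => h' i * S x j) ((i : ℕ) + 1) hin]
    · rw [dif_neg hin]
      exact Finset.sum_eq_zero fun x _ => by rw [if_neg (by omega)]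
  have e2 : (∑ x : Fin n, if ((x : ℕ) = (i : ℕ) - 1 ∧ 0 < (i : ℕ)) then -(h' x * S x j) else 0)
      = -(if hi : 0 < (i : ℕ) then h' ((i : ℕ) - 1) * S ⟨(i : ℕ) - 1, by omega⟩ j else 0) := by
    by_cases hi0 : 0 < (i : ℕ)
    · rw [dif_pos hi0, ← sum_spike (fun x : Fin n => -(h' x * S x j)) ((i : ℕ) - 1) (by omega)]
      exact Finset.sum_congr rfl fun x _ => by simp [hi0]
    · rw [dif_neg hi0, neg_zero]
      exact Finset.sum_eq_zero fun x _ => by simp [hi0]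
  rw [e1, e2]
  ring

lemma aux_main (n : ℕ) (hn : 2 ≤ n) (s : ℕ → ℕ → ℝ) (h h' : ℕ → ℝ)
    (hh : ∀ i, i < n - 1 → h i ≠ 0) (hh' : ∀ i, i < n - 1 → h' i ≠ 0)
    (hzero : ∀ i j : ℕ, n ≤ i ∨ n ≤ j → s i j = 0)
    (col0 : ∀ i : ℕ, s i 0 = if i = 0 then 1 else 0)
    (row1 : ∀ j : ℕ, s 1 j = if j = 1 then 1 else 0)
    (key : ∀ i j : ℕ, i < n → j < n →
      (if j = 0 then 0 else s i (j - 1) * h (j - 1)) - s i (j + 1) * h j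
        = h' i * s (i + 1) j - (if i = 0 then 0 else h' (i - 1) * s (i - 1) j)) :
    (∀ i j, i ≠ j → s i j = 0) ∧ s 0 0 = 1
      ∧ (∀ i, i < n → (s i i = 1 ∨ s i i = -1))
      ∧ (∀ k, k < n - 1 → |h k| = |h' k|) := by
  have s00 : s 0 0 = 1 := by rw [col0]; simp
  have s11 : s 1 1 = 1 := by rw [row1]; simp
  have h0ne : h 0 ≠ 0 := hh 0 (by omega)
  -- the basic consequence of key at column 0
  have keyi0 : ∀ i : ℕ, i < n →
      s i 1 * h 0 = (if i = 0 then 0 else h' (i - 1) * s (i - 1) 0) := by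
    intro i hi
    have k0 := key i 0 hi (by omega)
    rw [if_pos rfl] at k0
    have e1 : s (i + 1) 0 = 0 := by rw [col0]; simp
    rw [e1, mul_zero] at k0
    linarith
  have h00 : h 0 = h' 0 := by
    have := keyi0 1 (by omega)
    rw [if_neg (by omega)] at this
    simpa [s11, s00] using this
  have col1 : ∀ i : ℕ, s i 1 = if i = 1 then 1 else 0 := by
    intro i
    by_cases hi : i < n
    · rcases Nat.lt_or_ge i 1 with hi1 | hi1
      · have h0 : i = 0 := by omega
        subst h0
        have := keyi0 0 hi
        rw [if_pos rfl] at this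
        rw [if_neg (by omega)]
        exact (mul_eq_zero.mp this).resolve_right h0ne
      · rcases Nat.eq_or_lt_of_le hi1 with hi1 | hi1
        · rw [← hi1, row1]
        · have := keyi0 i hi
          rw [if_neg (by omega), col0, if_neg (by omega), mul_zero] at this
          rw [if_neg (by omega)]
          exact (mul_eq_zero.mp this).resolve_right h0ne
    · rw [hzero i 1 (Or.inl (by omega)), if_neg (by omega)]
  -- row 0
  have row0' : ∀ j : ℕ, 1 ≤ j → s 0 j = 0 := by
    intro j
    induction j using Nat.strong_induction_on with
    | _ j IH =>
      intro hj1
      by_cases hjn : j < n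
      · rcases Nat.lt_or_ge j 2 with hj2 | hj2
        · have : j = 1 := by omega
          subst this
          rw [col1, if_neg (by omega)]
        · have k0 := key 0 (j - 1) (by omega) (by omega)
          rw [if_neg (show ¬ j - 1 = 0 by omega), if_pos rfl, sub_zero,
            show j - 1 + 1 = j by omega, show j - 1 - 1 = j - 2 by omega,
            Nat.zero_add] at k0
          rcases Nat.lt_or_ge j 3 with hj3 | hj3
          · have hj : j = 2 := by omega
            subst hj
            norm_num [s00, s11] at k0
            have h1ne : h 1 ≠ 0 := hh 1 (by omega)
            have : s 0 2 * h 1 = 0 := by rw [h00] at k0; linarith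
            exact (mul_eq_zero.mp this).resolve_right h1ne
          · have e1 : s 0 (j - 2) = 0 := IH (j - 2) (by omega) (by omega)
            have e2 : s 1 (j - 1) = 0 := by rw [row1, if_neg (by omega)]
            rw [e1, e2, zero_mul, mul_zero] at k0
            have : s 0 j * h (j - 1) = 0 := by linarith
            exact (mul_eq_zero.mp this).resolve_right (hh (j - 1) (by omega))
      · exact hzero 0 j (Or.inr (by omega))
  have row0 : ∀ j : ℕ, s 0 j = if j = 0 then 1 else 0 := by
    intro j
    by_cases hj : j = 0
    · subst hj; simpa using s00
    · rw [row0' j (by omega), if_neg hj]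
  -- main induction
  have P : ∀ k, k < n →
      (∀ i : ℕ, s i k = if i = k then s k k else 0) ∧
      (∀ j : ℕ, s k j = if j = k then s k k else 0) ∧
      (s k k = 1 ∨ s k k = -1) := by
    intro k
    induction k using Nat.strong_induction_on with
    | _ k IH =>
      intro hk
      rcases k with _ | _ | K
      · refine ⟨fun i => ?_, fun j => ?_, Or.inl s00⟩
        · rw [col0, s00]
        · rw [row0, s00]
      · refine ⟨fun i => ?_, fun j => ?_, Or.inl s11⟩
        · rw [col1, s11]
        · rw [row1, s11]
      · -- step : k = K + 2
        have hK1 : K + 1 < n := by omega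
        have hK0 : K < n := by omega
        obtain ⟨pcol, prow, ppm⟩ := IH K (by omega) hK0
        obtain ⟨qcol, qrow, qpm⟩ := IH (K + 1) (by omega) hK1
        have hKn1 : K + 1 < n - 1 := by omega
        have hKne : h (K + 1) ≠ 0 := hh (K + 1) hKn1
        have hK'ne : h' (K + 1) ≠ 0 := hh' (K + 1) hKn1
        -- column K+2 off-diagonal entries vanish
        have colNew0 : ∀ i : ℕ, i ≠ K + 2 → s i (K + 2) = 0 := by
          intro i hiK
          by_cases hi : i < n
          · by_cases hik : i = K
            · subst hik
              rw [prow, if_neg (by omega)]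
            by_cases hik1 : i = K + 1
            · subst hik1
              rw [qrow, if_neg (by omega)]
            have k1 := key i (K + 1) hi hK1
            rw [if_neg (by omega : ¬ K + 1 = 0), Nat.add_sub_cancel] at k1
            have e1 : s i K = 0 := by rw [pcol, if_neg hik]
            have e2 : s (i + 1) (K + 1) = 0 := by rw [qcol, if_neg (by omega)]
            have e3 : (if i = 0 then 0 else h' (i - 1) * s (i - 1) (K + 1)) = 0 := by
              by_cases hi0 : i = 0
              · rw [if_pos hi0]
              · rw [if_neg hi0, qcol, if_neg (by omega), mul_zero]
            rw [e1, e2, e3, zero_mul, mul_zero] at k1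
            have : s i (K + 1 + 1) * h (K + 1) = 0 := by linarith
            exact (mul_eq_zero.mp this).resolve_right hKne
          · exact hzero _ _ (Or.inl (by omega))
        -- relation A: diagonal entry from the column recursion
        have relA : s (K + 2) (K + 2) * h (K + 1) = s (K + 1) (K + 1) * h' (K + 1) := by
          have k1 := key (K + 2) (K + 1) hk hK1
          rw [if_neg (by omega : ¬ K + 1 = 0), if_neg (by omega : ¬ K + 2 = 0),
            show K + 1 - 1 = K from rfl, show K + 2 - 1 = K + 1 from rfl,
            show K + 1 + 1 = K + 2 from rfl] at k1
          have e1 : s (K + 2) K = 0 := by rw [pcol, if_neg (by omega)]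
          have e2 : s (K + 2 + 1) (K + 1) = 0 := by rw [qcol, if_neg (by omega)]
          rw [e1, e2, zero_mul, mul_zero] at k1
          linarith
        -- row K+2 off-diagonal entries vanish
        have rowNew0 : ∀ j : ℕ, j ≠ K + 2 → s (K + 2) j = 0 := by
          intro j hjK
          by_cases hj : j < n
          · by_cases hjk : j = K
            · subst hjk
              rw [pcol, if_neg (by omega)]
            by_cases hjk1 : j = K + 1
            · subst hjk1
              rw [qcol, if_neg (by omega)]
            have k1 := key (K + 1) j hK1 hj
            rw [if_neg (by omega : ¬ K + 1 = 0), Nat.add_sub_cancel] at k1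
            have e1 : (if j = 0 then 0 else s (K + 1) (j - 1) * h (j - 1)) = 0 := by
              by_cases hj0 : j = 0
              · rw [if_pos hj0]
              · rw [if_neg hj0, qrow, if_neg (by omega), zero_mul]
            have e2 : s (K + 1) (j + 1) = 0 := by rw [qrow, if_neg (by omega)]
            have e3 : s K j = 0 := by rw [prow, if_neg (by omega)]
            rw [e1, e2, e3, zero_mul, mul_zero] at k1
            have : h' (K + 1) * s (K + 1 + 1) j = 0 := by linarith
            exact ((mul_eq_zero.mp this).resolve_left hK'ne)
          · exact hzero _ _ (Or.inr (by omega))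
        -- relation B: diagonal entry from the row recursion
        have relB : s (K + 2) (K + 2) * h' (K + 1) = s (K + 1) (K + 1) * h (K + 1) := by
          have k1 := key (K + 1) (K + 2) hK1 hk
          rw [if_neg (by omega : ¬ K + 2 = 0), if_neg (by omega : ¬ K + 1 = 0),
            show K + 2 - 1 = K + 1 from rfl, show K + 1 - 1 = K from rfl,
            show K + 1 + 1 = K + 2 from rfl] at k1
          have e1 : s (K + 1) (K + 2 + 1) = 0 := by rw [qrow, if_neg (by omega)]
          have e2 : s K (K + 2) = 0 := by rw [prow, if_neg (by omega)]
          rw [e1, e2, zero_mul, mul_zero] at k1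
          linarith
        -- the new diagonal entry is ±1
        have cc : s (K + 1) (K + 1) * s (K + 1) (K + 1) = 1 := by
          rcases qpm with hq | hq <;> rw [hq] <;> norm_num
        have ee : s (K + 2) (K + 2) * s (K + 2) (K + 2) = 1 := by
          have hprod : (s (K + 2) (K + 2) * s (K + 2) (K + 2)) * (h (K + 1) * h' (K + 1))
              = 1 * (h (K + 1) * h' (K + 1)) := by
            calc (s (K + 2) (K + 2) * s (K + 2) (K + 2)) * (h (K + 1) * h' (K + 1))
                = (s (K + 2) (K + 2) * h (K + 1)) * (s (K + 2) (K + 2) * h' (K + 1)) := by ring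
              _ = (s (K + 1) (K + 1) * h' (K + 1)) * (s (K + 1) (K + 1) * h (K + 1)) := by
                  rw [relA, relB]
              _ = (s (K + 1) (K + 1) * s (K + 1) (K + 1)) * (h (K + 1) * h' (K + 1)) := by ring
              _ = 1 * (h (K + 1) * h' (K + 1)) := by rw [cc]
          exact mul_right_cancel₀ (mul_ne_zero hKne hK'ne) hprod
        refine ⟨fun i => ?_, fun j => ?_, mul_self_eq_one_iff.mp ee⟩
        · by_cases hi : i = K + 2
          · rw [hi, if_pos rfl]
          · rw [colNew0 i hi, if_neg hi]
        · by_cases hj : j = K + 2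
          · rw [hj, if_pos rfl]
          · rw [rowNew0 j hj, if_neg hj]
  -- conclusions
  refine ⟨fun i j hij => ?_, s00, fun i hi => (P i hi).2.2, fun k hk => ?_⟩
  · by_cases hi : i < n
    · rw [(P i hi).2.1, if_neg (fun hji => hij hji.symm)]
    · exact hzero i j (Or.inl (by omega))
  · -- |h k| = |h' k|
    have hk1 : k + 1 < n := by omega
    obtain ⟨pcol, prow, ppm⟩ := P k (by omega)
    obtain ⟨qcol, qrow, qpm⟩ := P (k + 1) hk1
    have relA : s (k + 1) (k + 1) * h k = s k k * h' k := by
      have k1 := key (k + 1) k hk1 (by omega)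
      rw [if_neg (by omega : ¬ k + 1 = 0), Nat.add_sub_cancel] at k1
      have e1 : (if k = 0 then 0 else s (k + 1) (k - 1) * h (k - 1)) = 0 := by
        by_cases hk0 : k = 0
        · rw [if_pos hk0]
        · rw [if_neg hk0, qrow, if_neg (by omega), zero_mul]
      have e2 : s (k + 1 + 1) k = 0 := by rw [pcol, if_neg (by omega)]
      rw [e1, e2, mul_zero] at k1
      linarith
    rw [abs_eq_abs]
    rcases qpm with hq | hq <;> rcases ppm with hp | hp <;>
      rw [hq, hp] at relA
    · left; linarith
    · right; linarith
    · right; linarith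
    · left; linarith

theorem stmt_5 (n : ℕ) (hn : 2 ≤ n) (h h' : ℕ → ℝ)
    (hh : ∀ i, i < n - 1 → h i ≠ 0) (hh' : ∀ i, i < n - 1 → h' i ≠ 0)
    (S : Matrix (Fin n) (Fin n) ℝ) (hS : IsUnit S)
    (hB : S.mulVec (Pi.single ⟨0, by omega⟩ 1) = Pi.single ⟨0, by omega⟩ 1)
    (hC : Matrix.vecMul (Pi.single ⟨1, by omega⟩ 1) S = Pi.single ⟨1, by omega⟩ 1)
    (hAS : S * triA n h = triA n h' * S) :
    (∀ i j : Fin n, i ≠ j → S i j = 0)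
    ∧ S ⟨0, by omega⟩ ⟨0, by omega⟩ = 1
    ∧ (∀ i : Fin n, S i i = 1 ∨ S i i = -1)
    ∧ ∀ i, i < n - 1 → |h i| = |h' i| := by
  classical
  set s : ℕ → ℕ → ℝ := fun i j =>
    if hi : i < n then if hj : j < n then S ⟨i, hi⟩ ⟨j, hj⟩ else 0 else 0 with hs_def
  have hsval : ∀ (i j : ℕ) (hi : i < n) (hj : j < n), s i j = S ⟨i, hi⟩ ⟨j, hj⟩ := by
    intro i j hi hj
    simp only [hs_def]
    rw [dif_pos hi, dif_pos hj]
  have hzero : ∀ i j : ℕ, n ≤ i ∨ n ≤ j → s i j = 0 := by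
    intro i j hij
    simp only [hs_def]
    rcases hij with hi | hj
    · rw [dif_neg (by omega)]
    · by_cases hi : i < n
      · rw [dif_pos hi, dif_neg (by omega)]
      · rw [dif_neg hi]
  have col0 : ∀ i : ℕ, s i 0 = if i = 0 then 1 else 0 := by
    intro i
    by_cases hi : i < n
    · have h2 := congrFun hB ⟨i, hi⟩
      rw [Matrix.mulVec_single] at h2
      simp only [Pi.smul_apply, Matrix.col_apply, op_smul_eq_mul] at h2
      rw [Pi.single_apply, mul_one] at h2
      rw [hsval i 0 hi (by omega), h2]
      by_cases hc : i = 0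
      · rw [if_pos hc, if_pos (by exact Fin.ext hc)]
      · rw [if_neg hc, if_neg (fun hcc => hc (congrArg Fin.val hcc))]
    · rw [hzero i 0 (Or.inl (by omega)), if_neg (by omega)]
  have row1 : ∀ j : ℕ, s 1 j = if j = 1 then 1 else 0 := by
    intro j
    by_cases hj : j < n
    · have h2 := congrFun hC ⟨j, hj⟩
      rw [Matrix.single_vecMul] at h2
      simp only [Pi.smul_apply, Matrix.row_apply, smul_eq_mul] at h2
      rw [Pi.single_apply, one_mul] at h2
      rw [hsval 1 j (by omega) hj, h2]
      by_cases hc : j = 1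
      · rw [if_pos hc, if_pos (by exact Fin.ext hc)]
      · rw [if_neg hc, if_neg (fun hcc => hc (congrArg Fin.val hcc))]
    · rw [hzero 1 j (Or.inr (by omega)), if_neg (by omega)]
  have key : ∀ i j : ℕ, i < n → j < n →
      (if j = 0 then 0 else s i (j - 1) * h (j - 1)) - s i (j + 1) * h j
        = h' i * s (i + 1) j - (if i = 0 then 0 else h' (i - 1) * s (i - 1) j) := by
    intro i j hi hj
    have k := congrFun (congrFun hAS ⟨i, hi⟩) ⟨j, hj⟩
    rw [mul_triA_apply, triA_mul_apply] at k
    have L : (if j = 0 then (0:ℝ) else s i (j - 1) * h (j - 1)) - s i (j + 1) * h j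
        = (S * triA n h) ⟨i, hi⟩ ⟨j, hj⟩ := by
      rw [mul_triA_apply]
      congr 1
      · by_cases hj0 : 0 < j
        · rw [dif_pos hj0, if_neg (by omega)]
          rw [hsval i (j - 1) hi (by omega)]
        · rw [dif_neg hj0, if_pos (by omega)]
      · by_cases hjn : j + 1 < n
        · rw [dif_pos hjn, hsval i (j + 1) hi hjn]
        · rw [dif_neg hjn, hzero i (j + 1) (Or.inr (by omega)), zero_mul]
    have R : h' i * s (i + 1) j - (if i = 0 then 0 else h' (i - 1) * s (i - 1) j)
        = (triA n h' * S) ⟨i, hi⟩ ⟨j, hj⟩ := by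
      rw [triA_mul_apply]
      congr 1
      · by_cases hin : i + 1 < n
        · rw [dif_pos hin, hsval (i + 1) j hin hj]
        · rw [dif_neg hin, hzero (i + 1) j (Or.inl (by omega)), mul_zero]
      · by_cases hi0 : 0 < i
        · rw [dif_pos hi0, if_neg (by omega)]
          rw [hsval (i - 1) j (by omega) hj]
        · rw [dif_neg hi0, if_pos (by omega)]
    rw [L, R, hAS]
  obtain ⟨hoff, hd00, hdiag, habs⟩ :=
    aux_main n hn s h h' hh hh' hzero col0 row1 key
  refine ⟨fun i j hij => ?_, ?_, fun i => ?_, habs⟩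
  · rw [← hsval i.1 j.1 i.isLt j.isLt]
    exact hoff i.1 j.1 (fun hv => hij (Fin.ext hv))
  · rw [← hsval 0 0 (by omega) (by omega)]
    exact hd00
  · rw [← hsval i.1 i.1 i.isLt i.isLt]
    exact hdiag i.1 i.isLt
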